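/- Let α ∈ ℝ be irrational. Then there exists a constant c > 0 such that for every odd integer v, c · (min_{u odd} |vα − u|)² ≤ inf_{t ∈ [v−1, v+1]} |2 + e^{iπt} + e^{iπαt}|. -/

import Mathlib

lemma aux_two_mul_sq_le_one_add_cos {x : ℝ} {u : ℤ} (hu : Odd u) (h : |x - u| ≤ 1) :
    2 * (x - u) ^ 2 ≤ 1 + Real.cos (Real.pi * x) := by
  obtain ⟨k, hk⟩ := hu
  set r : ℝ := x - u with hr
  have hx : Real.pi * x = (Real.pi * r + Real.pi) + (k : ℝ) * (2 * Real.pi) := by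
    have : (u : ℝ) = 2 * k + 1 := by exact_mod_cast congrArg (Int.cast : ℤ → ℝ) hk
    rw [hr, this]; ring
  have hcos : Real.cos (Real.pi * x) = - Real.cos (Real.pi * r) := by
    rw [hx, Real.cos_add_int_mul_two_pi, Real.cos_add_pi]
  have hhalf : 2 * Real.sin (Real.pi * r / 2) ^ 2 = 1 - Real.cos (Real.pi * r) := by
    have h1 := Real.cos_sq (Real.pi * r / 2)
    have h2 := Real.sin_sq (Real.pi * r / 2)
    have : 2 * (Real.pi * r / 2) = Real.pi * r := by ring
    rw [this] at h1
    linarith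
  have key : r ^ 2 ≤ Real.sin (Real.pi * r / 2) ^ 2 := by
    have habs : |r| ≤ Real.sin (Real.pi * |r| / 2) := by
      have hπ : (0 : ℝ) < Real.pi := Real.pi_pos
      have h1 : (0 : ℝ) ≤ Real.pi * |r| / 2 := by positivity
      have h2 : Real.pi * |r| / 2 ≤ Real.pi / 2 := by
        have := abs_nonneg r
        nlinarith
      have := Real.mul_le_sin h1 h2
      calc |r| = 2 / Real.pi * (Real.pi * |r| / 2) := by field_simp
        _ ≤ Real.sin (Real.pi * |r| / 2) := this
    have hsq : Real.sin (Real.pi * |r| / 2) ^ 2 = Real.sin (Real.pi * r / 2) ^ 2 := by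
      rcases abs_cases r with ⟨h1, _⟩ | ⟨h1, _⟩
      · rw [h1]
      · rw [h1]
        have : Real.pi * -r / 2 = -(Real.pi * r / 2) := by ring
        rw [this, Real.sin_neg, neg_sq]
    calc r ^ 2 = |r| ^ 2 := (sq_abs r).symm
      _ ≤ Real.sin (Real.pi * |r| / 2) ^ 2 := by
          exact pow_le_pow_left₀ (abs_nonneg r) habs 2
      _ = _ := hsq
  rw [hcos]
  clear_value r
  linarith [key, hhalf]

/-- Lower bound: for irrational `α` there exists `c > 0` such that for every odd integer `v`,
`c · (min_{u odd} |vα - u|)² ≤ inf_{t ∈ [v-1, v+1]} |2 + e^{iπt} + e^{iπαt}|`. -/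
theorem oddApprox_sq_le_inf_h (α : ℝ) (hα : Irrational α) :
    ∃ c : ℝ, 0 < c ∧ ∀ v : ℤ, Odd v →
      c * (sInf {x : ℝ | ∃ u : ℤ, Odd u ∧ x = |(v : ℝ) * α - (u : ℝ)|}) ^ 2
        ≤ ⨅ t : Set.Icc ((v : ℝ) - 1) ((v : ℝ) + 1),
            ‖2 + Complex.exp (Real.pi * (t : ℝ) * Complex.I)
              + Complex.exp (Real.pi * α * (t : ℝ) * Complex.I)‖ := by
  have hα0 : α ≠ 0 := fun h => (hα.ne_int 0) (by simp [h])
  have hα2 : (0 : ℝ) < α ^ 2 := by positivity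
  refine ⟨min (1/2) (1/(2 * α ^ 2)), lt_min (by norm_num) (by positivity), ?_⟩
  intro v hv
  set c : ℝ := min (1/2) (1/(2 * α ^ 2)) with hc
  set S : Set ℝ := {x : ℝ | ∃ u : ℤ, Odd u ∧ x = |(v : ℝ) * α - (u : ℝ)|} with hS
  set D : ℝ := sInf S with hD
  have hbdd : BddBelow S := ⟨0, by rintro x ⟨u, hu, rfl⟩; positivity⟩
  have hD0 : 0 ≤ D := le_csInf ⟨|(v : ℝ) * α - (1 : ℤ)|, 1, odd_one, rfl⟩
    (by rintro x ⟨u, hu, rfl⟩; positivity)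
  have hDle : ∀ u : ℤ, Odd u → D ≤ |(v : ℝ) * α - (u : ℝ)| := fun u hu =>
    csInf_le hbdd ⟨u, hu, rfl⟩
  haveI : Nonempty (Set.Icc ((v : ℝ) - 1) ((v : ℝ) + 1)) :=
    (Set.nonempty_Icc.mpr (by linarith)).to_subtype
  apply le_ciInf
  rintro ⟨t, ht⟩
  simp only [Set.mem_Icc] at ht
  -- real part computation
  have hre : (2 + Complex.exp (Real.pi * (t : ℝ) * Complex.I)
      + Complex.exp (Real.pi * α * (t : ℝ) * Complex.I)).re
      = 2 + Real.cos (Real.pi * t) + Real.cos (Real.pi * (α * t)) := by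
    have e1 : ((Real.pi : ℂ) * (t : ℝ) : ℂ) = ((Real.pi * t : ℝ) : ℂ) := by push_cast; ring
    have e2 : ((Real.pi : ℂ) * (α : ℝ) * (t : ℝ) : ℂ) = ((Real.pi * (α * t) : ℝ) : ℂ) := by
      push_cast; ring
    rw [e1, e2]
    simp only [Complex.add_re, Complex.exp_ofReal_mul_I_re]
    norm_num
  have hre_le : (2 + Complex.exp (Real.pi * (t : ℝ) * Complex.I)
      + Complex.exp (Real.pi * α * (t : ℝ) * Complex.I)).re
      ≤ ‖2 + Complex.exp (Real.pi * (t : ℝ) * Complex.I)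
      + Complex.exp (Real.pi * α * (t : ℝ) * Complex.I)‖ := Complex.re_le_norm _
  -- suffices to bound by the real part
  rw [hre] at hre_le
  have hs : |t - (v : ℝ)| ≤ 1 := abs_le.mpr ⟨by linarith [ht.1], by linarith [ht.2]⟩
  -- first cosine bound
  have hcos1 : 2 * (t - (v : ℝ)) ^ 2 ≤ 1 + Real.cos (Real.pi * t) :=
    aux_two_mul_sq_le_one_add_cos hv hs
  -- nearest odd integer to α * t
  set m : ℤ := round ((α * t - 1) / 2) with hm
  set u₀ : ℤ := 2 * m + 1 with hu₀def
  have hu₀ : Odd u₀ := ⟨m, by omega⟩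
  have hnear : |α * t - (u₀ : ℝ)| ≤ 1 := by
    have h1 := abs_sub_round ((α * t - 1) / 2)
    have : α * t - (u₀ : ℝ) = 2 * ((α * t - 1) / 2 - (m : ℝ)) := by
      push_cast [hu₀def]; ring
    rw [this, abs_mul, abs_two]
    linarith
  have hcos2 : 2 * (α * t - (u₀ : ℝ)) ^ 2 ≤ 1 + Real.cos (Real.pi * (α * t)) :=
    aux_two_mul_sq_le_one_add_cos hu₀ hnear
  have hc1 : -1 ≤ Real.cos (Real.pi * t) := Real.neg_one_le_cos _
  have hc2 : -1 ≤ Real.cos (Real.pi * (α * t)) := Real.neg_one_le_cos _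
  -- distance lower bound for the second factor
  have hlow : D - |α| * |t - (v : ℝ)| ≤ |α * t - (u₀ : ℝ)| := by
    have h1 : D ≤ |(v : ℝ) * α - (u₀ : ℝ)| := hDle u₀ hu₀
    have h2 : |(v : ℝ) * α - (u₀ : ℝ)| ≤ |α * t - (u₀ : ℝ)| + |α| * |t - (v : ℝ)| := by
      have : (v : ℝ) * α - (u₀ : ℝ) = (α * t - (u₀ : ℝ)) - α * (t - (v : ℝ)) := by ring
      rw [this]
      calc |(α * t - (u₀ : ℝ)) - α * (t - (v : ℝ))|
          ≤ |α * t - (u₀ : ℝ)| + |α * (t - (v : ℝ))| := abs_sub _ _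
        _ = |α * t - (u₀ : ℝ)| + |α| * |t - (v : ℝ)| := by rw [abs_mul]
    linarith
  have hcmin1 : c ≤ 1/2 := min_le_left _ _
  have hcmin2 : c * (2 * α ^ 2) ≤ 1 := by
    have h1 : c ≤ 1/(2 * α ^ 2) := min_le_right _ _
    rw [← le_div_iff₀ (by positivity)]
    calc c ≤ 1/(2 * α ^ 2) := h1
      _ = 1 / (2 * α ^ 2) := rfl
  have hcnn : 0 ≤ c := le_of_lt (lt_min (by norm_num) (by positivity))
  by_cases hcase : |α| * |t - (v : ℝ)| ≤ D / 2
  · -- second exponential dominates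
    have h1 : D / 2 ≤ |α * t - (u₀ : ℝ)| := by linarith
    have h2 : (D / 2) ^ 2 ≤ (α * t - (u₀ : ℝ)) ^ 2 := by
      calc (D / 2) ^ 2 ≤ |α * t - (u₀ : ℝ)| ^ 2 :=
            pow_le_pow_left₀ (by linarith) h1 2
        _ = (α * t - (u₀ : ℝ)) ^ 2 := sq_abs _
    have h3 : c * D ^ 2 ≤ (1/2) * D ^ 2 :=
      mul_le_mul_of_nonneg_right hcmin1 (sq_nonneg D)
    nlinarith [sq_nonneg (t - (v : ℝ))]
  · -- first exponential dominates
    push_neg at hcase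
    have h2 : (D / 2) ^ 2 ≤ (|α| * |t - (v : ℝ)|) ^ 2 :=
      pow_le_pow_left₀ (by linarith) hcase.le 2
    have h2' : D ^ 2 ≤ 4 * (α ^ 2 * (t - (v : ℝ)) ^ 2) := by
      have : (|α| * |t - (v : ℝ)|) ^ 2 = α ^ 2 * (t - (v : ℝ)) ^ 2 := by
        rw [mul_pow, sq_abs, sq_abs]
      nlinarith
    nlinarith [mul_le_mul_of_nonneg_left h2' hcnn,
      mul_nonneg (mul_nonneg hcnn hα2.le) (sq_nonneg (t - (v : ℝ))),
      sq_nonneg (t - (v : ℝ)),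
      mul_le_mul_of_nonneg_right hcmin2 (sq_nonneg (t - (v : ℝ)))]
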